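/- Let G be a group, let Γ be a compact topological group equipped with a Haar probability measure m, and let π : G → Γ be a surjective group homomorphism. Let X ⊆ G and let g₁, …, g_k ∈ G be finitely many elements such that G = g₁X ∪ … ∪ g_kX. Assume that for each i ∈ {1, …, k} the set {y ∈ Γ : π⁻¹({y}) ∩ gᵢX ≠ ∅ and π⁻¹({y}) ∩ (gᵢX)ᶜ ≠ ∅} has m-measure zero. Then there exists g ∈ G such that π⁻¹({1}) ⊆ gX, i.e. some left translate of X contains the kernel of π. -/

import Mathlib

open MeasureTheory Pointwise

/-- Section 2, Proposition: if `G` is covered by finitely many left translates of `X`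
and almost every fiber of `π` is contained in each translate or in its complement,
then some left translate of `X` contains the kernel of `π`. -/
theorem stmt0 {G Γ : Type*} [Group G] [Group Γ] [TopologicalSpace Γ] [CompactSpace Γ]
    [IsTopologicalGroup Γ] [MeasurableSpace Γ] (m : Measure Γ) [m.IsHaarMeasure]
    [IsProbabilityMeasure m] (π : G →* Γ) (hπ : Function.Surjective π)
    (X : Set G) (k : ℕ) (g : Fin k → G)
    (hcover : (⋃ i, g i • X) = Set.univ)
    (hdom : ∀ i : Fin k,
      m {y : Γ | (π ⁻¹' {y} ∩ g i • X).Nonempty ∧ (π ⁻¹' {y} ∩ (g i • X)ᶜ).Nonempty} = 0) :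
    ∃ g₀ : G, π ⁻¹' {1} ⊆ g₀ • X := by
  -- The union of the exceptional sets is null, hence not all of Γ.
  have hnull : m (⋃ i, {y : Γ | (π ⁻¹' {y} ∩ g i • X).Nonempty ∧
      (π ⁻¹' {y} ∩ (g i • X)ᶜ).Nonempty}) = 0 := measure_iUnion_null hdom
  have hne : (⋃ i, {y : Γ | (π ⁻¹' {y} ∩ g i • X).Nonempty ∧
      (π ⁻¹' {y} ∩ (g i • X)ᶜ).Nonempty}) ≠ Set.univ := by
    intro h
    rw [h, measure_univ] at hnull
    exact one_ne_zero hnull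
  -- pick a good point y
  obtain ⟨y, hy⟩ : ∃ y : Γ, y ∉ ⋃ i, {y : Γ | (π ⁻¹' {y} ∩ g i • X).Nonempty ∧
      (π ⁻¹' {y} ∩ (g i • X)ᶜ).Nonempty} := by
    by_contra hc
    push_neg at hc
    exact hne (Set.eq_univ_of_forall hc)
  obtain ⟨h, hh⟩ := hπ y
  -- h belongs to some translate
  have hmem : h ∈ ⋃ i, g i • X := hcover ▸ Set.mem_univ h
  obtain ⟨i, hi⟩ := Set.mem_iUnion.mp hmem
  -- the fiber of y is contained in g i • X
  have hfib : π ⁻¹' {y} ⊆ g i • X := by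
    intro x hx
    by_contra hxX
    exact hy (Set.mem_iUnion.mpr ⟨i, ⟨h, hh, hi⟩, ⟨x, hx, hxX⟩⟩)
  refine ⟨h⁻¹ * g i, fun x hx => ?_⟩
  have : h * x ∈ π ⁻¹' {y} := by
    simp only [Set.mem_preimage, Set.mem_singleton_iff, map_mul, hh] at hx ⊢
    rw [hx, mul_one]
  obtain ⟨z, hz, hzx⟩ := hfib this
  refine ⟨z, hz, ?_⟩
  simp only [smul_eq_mul] at hzx ⊢
  rw [mul_assoc, hzx, ← mul_assoc, inv_mul_cancel, one_mul]
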